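/- For any complex numbers c₀ and c₁ with c₁ ≠ 0, the three-qubit state c₀|000⟩ + c₁(|100⟩ + |010⟩ + |001⟩) is SLOCC-equivalent to the W state |100⟩ + |010⟩ + |001⟩. -/

import Mathlib

/-- The three-qubit W state `|100⟩ + |010⟩ + |001⟩`. -/
noncomputable def W3 : Fin 2 × Fin 2 × Fin 2 → ℂ :=
  fun x => if x = (1, 0, 0) ∨ x = (0, 1, 0) ∨ x = (0, 0, 1) then 1 else 0

/-- For `c₁ ≠ 0`, the state `c₀|000⟩ + c₁(|100⟩ + |010⟩ + |001⟩)` is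
SLOCC-equivalent to the W state. -/
theorem c0_plus_c1_w_slocc_equiv_w (c₀ c₁ : ℂ) (hc₁ : c₁ ≠ 0)
    (ψ : Fin 2 × Fin 2 × Fin 2 → ℂ)
    (hψ : ∀ x : Fin 2 × Fin 2 × Fin 2,
      ψ x = if x = (0, 0, 0) then c₀
        else if x = (1, 0, 0) ∨ x = (0, 1, 0) ∨ x = (0, 0, 1) then c₁ else 0) :
    ∃ A₁ A₂ A₃ : Matrix (Fin 2) (Fin 2) ℂ,
      IsUnit A₁ ∧ IsUnit A₂ ∧ IsUnit A₃ ∧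
      ∀ i j k : Fin 2,
        W3 (i, j, k) =
          ∑ a : Fin 2, ∑ b : Fin 2, ∑ c : Fin 2,
            A₁ i a * A₂ j b * A₃ k c * ψ (a, b, c) := by
  refine ⟨!![1/c₁, -c₀/c₁^2; 0, 1/c₁], 1, 1, ?_, isUnit_one, isUnit_one, ?_⟩
  · rw [Matrix.isUnit_iff_isUnit_det]
    simp only [Matrix.det_fin_two, Matrix.cons_val', Matrix.cons_val_zero, Matrix.cons_val_one,
      Matrix.head_cons, Matrix.head_fin_const, Matrix.empty_val', Matrix.cons_val_fin_one,
      isUnit_iff_ne_zero, Matrix.of_apply]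
    field_simp
    simp [hc₁]
  · intro i j k
    fin_cases i <;> fin_cases j <;> fin_cases k <;>
      simp [W3, hψ, Fin.sum_univ_two, Matrix.one_apply, Prod.ext_iff] <;>
      field_simp <;> ring
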